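/- Let $N \geq 1$ and let $X_j^j = \sum_{k=0}^{N+1} \lambda_{1-k} (2\pi i j)^{1-k} + r_j$ for all $j$ in an infinite subset $S^\bot \subseteq \mathbb{Z} \setminus \{0\}$ (closed under negation), where $\lambda_{1-k} \in \mathbb{R}$ and $|r_j| \leq C |j|^{-N-1}$. If $X_j^j$ is purely imaginary for every $j \in S^\bot$, then $\lambda_{1-k} = 0$ for every $k$ with $1 - k$ even, and each $r_j$ is purely imaginary. -/

import Mathlib

open scoped BigOperators

/-- If the diagonal elements `X_j^j = ∑_{k=0}^{N+1} λ_{1-k} (2πij)^{1-k} + r_j`,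
`j ∈ S⊥` (an infinite subset of `ℤ \ {0}` closed under negation), with real
coefficients `λ_{1-k}` and `|r_j| ≤ C|j|^{-N-1}`, are purely imaginary, then
`λ_{1-k} = 0` for every `k` with `1-k` even, and each `r_j` is purely imaginary. -/
theorem diagonal_purely_imaginary
    (N : ℕ) (hN : 1 ≤ N)
    (Sbot : Set ℤ) (hinf : Sbot.Infinite) (hneg : ∀ j ∈ Sbot, -j ∈ Sbot)
    (h0 : ∀ j ∈ Sbot, j ≠ 0)
    (lam : ℕ → ℝ) (r X : ℤ → ℂ) (C : ℝ)
    (hX : ∀ j ∈ Sbot, X j =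
      (∑ k ∈ Finset.range (N + 2),
        (lam k : ℂ) * (2 * (Real.pi : ℂ) * Complex.I * (j : ℂ)) ^ ((1 : ℤ) - k)) + r j)
    (hr : ∀ j ∈ Sbot, ‖r j‖ ≤ C * |(j : ℝ)| ^ (-(N : ℤ) - 1))
    (him : ∀ j ∈ Sbot, (X j).re = 0) :
    (∀ k < N + 2, Even ((1 : ℤ) - k) → lam k = 0) ∧ (∀ j ∈ Sbot, (r j).re = 0) := by
  classical
  -- Sbot is unbounded
  have hbig : ∀ B : ℝ, ∃ j ∈ Sbot, B < |(j : ℝ)| := by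
    intro B
    by_contra hcon
    push_neg at hcon
    apply hinf
    apply Set.Finite.subset (Set.finite_Icc (-⌈B⌉) ⌈B⌉)
    intro j hj
    have h2 : ((|j| : ℤ) : ℝ) ≤ B := by
      rw [Int.cast_abs]; exact hcon j hj
    have h3 : |j| ≤ ⌈B⌉ := by exact_mod_cast h2.trans (Int.le_ceil B)
    rw [Set.mem_Icc]
    constructor
    · linarith [neg_abs_le j]
    · linarith [le_abs_self j]
  obtain ⟨a, ha⟩ : ∃ a : ℕ → ℝ, ∀ k,
      a k = ((lam k : ℂ) * (2 * (Real.pi : ℂ) * Complex.I) ^ ((1 : ℤ) - k)).re :=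
    ⟨_, fun k => rfl⟩
  have hterm : ∀ (j : ℤ) (k : ℕ),
      ((lam k : ℂ) * (2 * (Real.pi : ℂ) * Complex.I * (j : ℂ)) ^ ((1 : ℤ) - k)).re
        = a k * (j : ℝ) ^ ((1 : ℤ) - k) := by
    intro j k
    have hx : ((j : ℂ)) ^ ((1 : ℤ) - k) = (((j : ℝ) ^ ((1 : ℤ) - k) : ℝ) : ℂ) := by
      rw [Complex.ofReal_zpow, Complex.ofReal_intCast]
    rw [mul_zpow, ← mul_assoc, hx, ha k, Complex.mul_re, Complex.ofReal_re,
      Complex.ofReal_im, mul_zero, sub_zero]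
  have hre : ∀ j ∈ Sbot,
      (∑ k ∈ Finset.range (N + 2), a k * (j : ℝ) ^ ((1 : ℤ) - k)) = -(r j).re := by
    intro j hj
    have h1 := him j hj
    rw [hX j hj, Complex.add_re, Complex.re_sum] at h1
    have h2 : ∑ k ∈ Finset.range (N + 2),
        ((lam k : ℂ) * (2 * (Real.pi : ℂ) * Complex.I * (j : ℂ)) ^ ((1 : ℤ) - k)).re
        = ∑ k ∈ Finset.range (N + 2), a k * (j : ℝ) ^ ((1 : ℤ) - k) :=
      Finset.sum_congr rfl fun k _ => hterm j k
    rw [h2] at h1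
    linarith
  set M : ℝ := |C| + ∑ k' ∈ Finset.range (N + 2), |a k'| with hMdef
  have hM0 : 0 ≤ M := by positivity
  have key : ∀ k, k < N + 2 → a k = 0 := by
    intro k
    induction k using Nat.strong_induction_on with
    | _ k ih =>
    intro hk
    by_contra hak
    have hakpos : 0 < |a k| := abs_pos.mpr hak
    have hbound : ∀ j ∈ Sbot, |a k| ≤ M / |(j : ℝ)| := by
      intro j hj
      have hj1 : (1 : ℝ) ≤ |(j : ℝ)| := by
        have hj0 : (1 : ℤ) ≤ |j| := Int.one_le_abs (h0 j hj)
        have h4 : ((1 : ℤ) : ℝ) ≤ ((|j| : ℤ) : ℝ) := Int.cast_le.mpr hj0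
        rwa [Int.cast_abs, Int.cast_one] at h4
      have hypos : 0 < |(j : ℝ)| := lt_of_lt_of_le one_pos hj1
      have hyne : |(j : ℝ)| ≠ 0 := ne_of_gt hypos
      have hsplit : a k * (j : ℝ) ^ ((1 : ℤ) - k)
          = (∑ k' ∈ Finset.range (N + 2), a k' * (j : ℝ) ^ ((1 : ℤ) - k'))
            - ∑ k' ∈ Finset.Ico (k + 1) (N + 2), a k' * (j : ℝ) ^ ((1 : ℤ) - k') := by
        rw [Finset.range_eq_Ico,
          ← Finset.sum_Ico_consecutive (fun k' => a k' * (j : ℝ) ^ ((1 : ℤ) - k'))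
            (Nat.zero_le k) hk.le]
        have hz : ∑ k' ∈ Finset.Ico 0 k, a k' * (j : ℝ) ^ ((1 : ℤ) - k') = 0 :=
          Finset.sum_eq_zero fun k' hk' => by
            rw [ih k' (Finset.mem_Ico.mp hk').2 (lt_trans (Finset.mem_Ico.mp hk').2 hk),
              zero_mul]
        rw [hz, zero_add, Finset.sum_eq_sum_Ico_succ_bot hk]
        ring
      have hb1 : |a k| * |(j : ℝ)| ^ ((1 : ℤ) - k) ≤ M * |(j : ℝ)| ^ (-(k : ℤ)) := by
        have e1 : |a k| * |(j : ℝ)| ^ ((1 : ℤ) - k) = |a k * (j : ℝ) ^ ((1 : ℤ) - k)| := by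
          rw [abs_mul,
            show |(j : ℝ) ^ ((1 : ℤ) - k)| = |(j : ℝ)| ^ ((1 : ℤ) - k) from
              map_zpow₀ (absHom : ℝ →*₀ ℝ) _ _]
        rw [e1, hsplit]
        have t1 : |∑ k' ∈ Finset.range (N + 2), a k' * (j : ℝ) ^ ((1 : ℤ) - k')|
            ≤ |C| * |(j : ℝ)| ^ (-(k : ℤ)) := by
          rw [hre j hj, abs_neg]
          calc |(r j).re| ≤ ‖r j‖ := Complex.abs_re_le_norm (r j)
            _ ≤ C * |(j : ℝ)| ^ (-(N : ℤ) - 1) := hr j hj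
            _ ≤ |C| * |(j : ℝ)| ^ (-(k : ℤ)) := by
                apply mul_le_mul (le_abs_self C) (zpow_le_zpow_right₀ hj1 (by omega))
                  (zpow_nonneg (le_of_lt hypos) _) (abs_nonneg C)
        have t2 : |∑ k' ∈ Finset.Ico (k + 1) (N + 2), a k' * (j : ℝ) ^ ((1 : ℤ) - k')|
            ≤ (∑ k' ∈ Finset.range (N + 2), |a k'|) * |(j : ℝ)| ^ (-(k : ℤ)) := by
          calc |∑ k' ∈ Finset.Ico (k + 1) (N + 2), a k' * (j : ℝ) ^ ((1 : ℤ) - k')|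
              ≤ ∑ k' ∈ Finset.Ico (k + 1) (N + 2), |a k' * (j : ℝ) ^ ((1 : ℤ) - k')| :=
                Finset.abs_sum_le_sum_abs _ _
            _ ≤ ∑ k' ∈ Finset.Ico (k + 1) (N + 2), |a k'| * |(j : ℝ)| ^ (-(k : ℤ)) := by
                apply Finset.sum_le_sum
                intro k' hk'
                rw [abs_mul,
                  show |(j : ℝ) ^ ((1 : ℤ) - k')| = |(j : ℝ)| ^ ((1 : ℤ) - k') from
                    map_zpow₀ (absHom : ℝ →*₀ ℝ) _ _]
                apply mul_le_mul_of_nonneg_left _ (abs_nonneg _)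
                exact zpow_le_zpow_right₀ hj1
                  (by have := (Finset.mem_Ico.mp hk').1; omega)
            _ = (∑ k' ∈ Finset.Ico (k + 1) (N + 2), |a k'|) * |(j : ℝ)| ^ (-(k : ℤ)) := by
                rw [Finset.sum_mul]
            _ ≤ (∑ k' ∈ Finset.range (N + 2), |a k'|) * |(j : ℝ)| ^ (-(k : ℤ)) := by
                apply mul_le_mul_of_nonneg_right _ (zpow_nonneg (le_of_lt hypos) _)
                apply Finset.sum_le_sum_of_subset_of_nonneg
                · rw [Finset.range_eq_Ico]
                  exact Finset.Ico_subset_Ico (Nat.zero_le _) le_rfl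
                · intro i _ _; exact abs_nonneg _
        calc |_ - _| ≤ |∑ k' ∈ Finset.range (N + 2), a k' * (j : ℝ) ^ ((1 : ℤ) - k')|
              + |∑ k' ∈ Finset.Ico (k + 1) (N + 2), a k' * (j : ℝ) ^ ((1 : ℤ) - k')| :=
                abs_sub _ _
          _ ≤ |C| * |(j : ℝ)| ^ (-(k : ℤ))
              + (∑ k' ∈ Finset.range (N + 2), |a k'|) * |(j : ℝ)| ^ (-(k : ℤ)) := add_le_add t1 t2
          _ = M * |(j : ℝ)| ^ (-(k : ℤ)) := by rw [hMdef, add_mul]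
      have h := mul_le_mul_of_nonneg_right hb1
        (zpow_nonneg (abs_nonneg (j : ℝ)) ((k : ℤ) - 1))
      rw [mul_assoc, mul_assoc, ← zpow_add₀ hyne, ← zpow_add₀ hyne] at h
      have e2 : (1 - (k : ℤ)) + ((k : ℤ) - 1) = 0 := by ring
      have e3 : (-(k : ℤ)) + ((k : ℤ) - 1) = -1 := by ring
      rw [e2, e3, zpow_zero, mul_one, zpow_neg_one] at h
      rw [div_eq_mul_inv]
      exact h
    obtain ⟨j, hj, hjbig⟩ := hbig (M / |a k|)
    have hypos : 0 < |(j : ℝ)| := lt_of_le_of_lt (div_nonneg hM0 (abs_nonneg _)) hjbig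
    have h5 : M < |a k| * |(j : ℝ)| := by
      rw [div_lt_iff₀ hakpos] at hjbig
      linarith [hjbig]
    have h6 := hbound j hj
    rw [le_div_iff₀ hypos] at h6
    linarith
  have hw : (2 * (Real.pi : ℂ) * Complex.I) ≠ 0 := by
    simp [Real.pi_ne_zero, Complex.I_ne_zero, Complex.ofReal_ne_zero]
  constructor
  · intro k hk hkev
    have hc0 : (lam k : ℂ) * (2 * (Real.pi : ℂ) * Complex.I) ^ ((1 : ℤ) - k) = 0 := by
      have hconj : (starRingEnd ℂ) ((lam k : ℂ) * (2 * (Real.pi : ℂ) * Complex.I) ^ ((1 : ℤ) - k))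
          = (lam k : ℂ) * (2 * (Real.pi : ℂ) * Complex.I) ^ ((1 : ℤ) - k) := by
        rw [map_mul, map_zpow₀, Complex.conj_ofReal]
        have : (starRingEnd ℂ) (2 * (Real.pi : ℂ) * Complex.I)
            = -(2 * (Real.pi : ℂ) * Complex.I) := by
          rw [map_mul, map_mul, Complex.conj_I, Complex.conj_ofReal, map_ofNat]
          ring
        rw [this, Even.neg_zpow hkev]
      have him0 := Complex.conj_eq_iff_im.mp hconj
      have hre0 : ((lam k : ℂ) * (2 * (Real.pi : ℂ) * Complex.I) ^ ((1 : ℤ) - k)).re = 0 := by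
        rw [← ha k]; exact key k hk
      exact Complex.ext hre0 him0
    rcases mul_eq_zero.mp hc0 with h | h
    · exact_mod_cast h
    · exact absurd h (zpow_ne_zero _ hw)
  · intro j hj
    have h1 := hre j hj
    rw [Finset.sum_eq_zero (fun k hk => by
      rw [key k (Finset.mem_range.mp hk), zero_mul])] at h1
    linarith
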